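/- Let ⊢ be a regular entailment relation on a preordered commutative group G and fix x in G. Define A ⊢ₓ B to hold iff there exists a natural number p such that A ∪ (A + p·x) ⊢ B. Then ⊢ₓ is a regular entailment relation with 0 ⊢ₓ x, and it is the least regular entailment relation containing ⊢ in which {0} entails {x}. -/
import Mathlib


open Finset Pointwise

/-- A regular entailment relation on a preordered commutative group `G`:
a relation between nonempty finite subsets of `G` satisfying weakening, cut,
`{a} ⊢ {b}` when `a ≤ b`, translation invariance, and regularity. -/
structure IsRegularEntailment {G : Type*} [AddCommGroup G] [Preorder G]
    [CovariantClass G G (· + ·) (· ≤ ·)] [DecidableEq G]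
    (r : Finset G → Finset G → Prop) : Prop where
  weaken : ∀ {A A' B B' : Finset G}, A'.Nonempty → B'.Nonempty →
    A' ⊆ A → B' ⊆ B → r A' B' → r A B
  cut : ∀ {A B : Finset G} (x : G), A.Nonempty → B.Nonempty →
    r (insert x A) B → r A (insert x B) → r A B
  of_le : ∀ {a b : G}, a ≤ b → r {a} {b}
  translate : ∀ {A B : Finset G} (x : G),
    r (A.image (· + x)) (B.image (· + x)) → r A B
  regular : ∀ a b x y : G, r {a + x, b + y} {a + b, x + y}

section Helpers
variable {G : Type*} [AddCommGroup G] [Preorder G]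
    [CovariantClass G G (· + ·) (· ≤ ·)] [DecidableEq G]
    {r : Finset G → Finset G → Prop}

lemma RE.tfwd (hr : IsRegularEntailment r) {A B : Finset G} (t : G) (h : r A B) :
    r (A.image (· + t)) (B.image (· + t)) := by
  apply hr.translate (-t)
  have h1 : ∀ (C : Finset G), (C.image (· + t)).image (· + (-t)) = C := by
    intro C
    rw [Finset.image_image]
    simp [Function.comp]
  rw [h1, h1]; exact h

lemma RE.reg' (hr : IsRegularEntailment r) (s t w : G) : r {s, t} {w, s + t - w} := by
  have h := hr.regular w 0 (s - w) t
  have e1 : w + (s - w) = s := by abel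
  have e2 : (0:G) + t = t := by abel
  have e3 : w + 0 = w := by abel
  have e4 : s - w + t = s + t - w := by abel
  rw [e1, e2, e3, e4] at h
  exact h

lemma RE.drop_one (hr : IsRegularEntailment r) (x : G) (n : ℕ) :
    ∀ a : G, r {a, a + (n+1) • x} {a + n • x} := by
  induction n with
  | zero =>
    intro a
    have h0 : r {a} {a} := hr.of_le le_rfl
    have : r {a, a + 1 • x} {a + 0 • x} := by
      refine hr.weaken (Finset.singleton_nonempty a) (Finset.singleton_nonempty a) ?_ ?_ h0
      · intro z hz; simp at hz; simp [hz]
      · intro z hz; simp at hz; simp [hz]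
    simpa using this
  | succ n IH =>
    intro a
    have hreg := RE.reg' hr a (a + (n+2) • x) (a + (n+1) • x)
    have e : a + (a + (n+2) • x) - (a + (n+1) • x) = a + x := by
      have : ((n:ℕ)+2) • x = ((n:ℕ)+1) • x + x := by
        rw [add_smul, add_smul]; abel
      rw [this]; abel
    rw [e] at hreg
    have hIH := IH (a + x)
    have e1 : a + x + (n+1) • x = a + (n+2) • x := by
      rw [show ((n:ℕ)+2) • x = ((n:ℕ)+1) • x + x by rw [add_smul, add_smul]; abel]; abel
    have e2 : a + x + n • x = a + (n+1) • x := by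
      rw [show ((n:ℕ)+1) • x = (n:ℕ) • x + x by rw [add_smul]; abel]; abel
    rw [e1, e2] at hIH
    refine hr.cut (a + x) (by simp) (by simp) ?_ ?_
    · refine hr.weaken ?_ ?_ ?_ ?_ hIH
      · simp
      · simp
      · intro z hz; simp at hz ⊢; tauto
      · intro z hz; simp at hz ⊢; tauto
    · refine hr.weaken ?_ ?_ ?_ ?_ hreg
      · simp
      · simp
      · intro z hz; simp at hz ⊢; tauto
      · intro z hz; simp at hz ⊢; tauto

lemma RE.drop' (hr : IsRegularEntailment r) (x : G) (d : ℕ) :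
    ∀ (j : ℕ) (a : G), r {a, a + (j + d) • x} {a + j • x} := by
  induction d with
  | zero =>
    intro j a
    refine hr.weaken (by simp) (by simp) ?_ (by simp) (hr.of_le (le_refl (a + j • x)))
    intro z hz; simp at hz ⊢; tauto
  | succ d IH =>
    intro j a
    have hIH := IH (j+1) a
    have e : (j + 1 + d) = (j + (d+1)) := by omega
    rw [e] at hIH
    have h1 := RE.drop_one hr x j a
    refine hr.cut (a + (j+1) • x) (by simp) (by simp) ?_ ?_
    · refine hr.weaken ?_ (by simp) ?_ (by simp) h1
      · simp
      · intro z hz; simp at hz ⊢; tauto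
    · refine hr.weaken (by simp) (by simp) ?_ ?_ hIH
      · intro z hz; simp at hz ⊢; tauto
      · intro z hz; simp at hz ⊢; tauto

lemma RE.drop (hr : IsRegularEntailment r) (x : G) {j k : ℕ} (h : j ≤ k) (a : G) :
    r {a, a + k • x} {a + j • x} := by
  have := RE.drop' hr x (k - j) j a
  rwa [show j + (k - j) = k by omega] at this

lemma RE.purge (hr : IsRegularEntailment r) (x : G) {p q : ℕ} (hpq : p ≤ q)
    {A B : Finset G} (hA : A.Nonempty) (hB : B.Nonempty) (S : Finset G) (hS : S ⊆ A)
    (h : r (A ∪ A.image (· + q • x) ∪ S.image (· + p • x)) B) :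
    r (A ∪ A.image (· + q • x)) B := by
  induction S using Finset.induction_on with
  | empty => simpa using h
  | @insert a S' ha IH =>
    have haA : a ∈ A := hS (Finset.mem_insert_self a S')
    have hS' : S' ⊆ A := fun z hz => hS (Finset.mem_insert_of_mem hz)
    have hcut : r (A ∪ A.image (· + q • x) ∪ S'.image (· + p • x)) B := by
      refine hr.cut (a + p • x)
        (hA.mono ((Finset.subset_union_left).trans Finset.subset_union_left)) hB ?_ ?_
      · refine hr.weaken (hA.mono ?_) hB ?_ (Finset.Subset.refl B) h
        · intro z hz
          exact Finset.mem_union_left _ (Finset.mem_union_left _ hz)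
        · intro z hz; simp at hz ⊢; tauto
      · refine hr.weaken (by simp) (by simp) ?_ ?_ (RE.drop hr x hpq a)
        · intro z hz
          simp only [Finset.mem_insert, Finset.mem_singleton] at hz
          rcases hz with h1 | h1 <;> subst h1
          · exact Finset.mem_union_left _ (Finset.mem_union_left _ haA)
          · exact Finset.mem_union_left _
              (Finset.mem_union_right _ (Finset.mem_image_of_mem _ haA))
        · intro z hz; simp at hz ⊢; tauto
    exact IH hS' hcut

lemma RE.mono (hr : IsRegularEntailment r) (x : G) {p q : ℕ} (hpq : p ≤ q)
    {A B : Finset G} (hA : A.Nonempty) (hB : B.Nonempty)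
    (h : r (A ∪ A.image (· + p • x)) B) : r (A ∪ A.image (· + q • x)) B := by
  refine RE.purge hr x hpq hA hB A (Finset.Subset.refl A) ?_
  refine hr.weaken (hA.mono ?_) hB ?_ (Finset.Subset.refl B) h
  · intro z hz
    exact Finset.mem_union_left _ hz
  · intro z hz
    rcases Finset.mem_union.mp hz with h' | h'
    · exact Finset.mem_union_left _ (Finset.mem_union_left _ h')
    · exact Finset.mem_union_right _ h' 

lemma RE.xcut (hr : IsRegularEntailment r) (x : G) {A B : Finset G} (c : G)
    (hA : A.Nonempty) (hB : B.Nonempty)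
    (h1 : ∃ p : ℕ, r ((insert c A) ∪ (insert c A).image (· + p • x)) B)
    (h2 : ∃ q : ℕ, r (A ∪ A.image (· + q • x)) (insert c B)) :
    ∃ m : ℕ, r (A ∪ A.image (· + m • x)) B := by
  obtain ⟨p, h1⟩ := h1
  obtain ⟨q, h2⟩ := h2
  set n := max p q with hn
  have h1' : r ((insert c A) ∪ (insert c A).image (· + n • x)) B :=
    RE.mono hr x (le_max_left p q) (Finset.insert_nonempty c A) hB h1
  have h2' : r (A ∪ A.image (· + n • x)) (insert c B) :=
    RE.mono hr x (le_max_right p q) hA (Finset.insert_nonempty c B) h2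
  set D : Finset G := A ∪ A.image (· + (2*n) • x) ∪ A.image (· + n • x) with hD
  have hDne : D.Nonempty := hA.mono (Finset.subset_union_left.trans Finset.subset_union_left)
  have e2n : ∀ a : G, a + n • x + n • x = a + (2*n) • x := by
    intro a; rw [two_mul, add_smul]; abel
  have hne1 : ((insert c A) ∪ (insert c A).image (· + n • x)).Nonempty :=
    (Finset.insert_nonempty c A).mono Finset.subset_union_left
  have hne2 : (A ∪ A.image (· + n • x)).Nonempty := hA.mono Finset.subset_union_left
  -- S4 : r (insert (c + n•x) D) B
  have S4 : r (insert (c + n • x) D) B := by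
    refine hr.cut c (Finset.insert_nonempty _ _) hB ?_ ?_
    · refine hr.weaken hne1 hB ?_ (Finset.Subset.refl B) h1'
      intro z hz
      simp only [Finset.mem_union, Finset.mem_image, Finset.mem_insert] at hz
      simp only [hD, Finset.mem_insert, Finset.mem_union, Finset.mem_image]
      rcases hz with (rfl | hzA) | ⟨a, (rfl | haA), rfl⟩
      · exact Or.inl rfl
      · exact Or.inr (Or.inr (Or.inl (Or.inl hzA)))
      · exact Or.inr (Or.inl rfl)
      · exact Or.inr (Or.inr (Or.inr ⟨a, haA, rfl⟩))
    · refine hr.weaken hne2 (Finset.insert_nonempty c B) ?_ (Finset.Subset.refl _) h2'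
      intro z hz
      simp only [hD, Finset.mem_insert, Finset.mem_union]
      rcases Finset.mem_union.mp hz with h' | h'
      · exact Or.inr (Or.inl (Or.inl h'))
      · exact Or.inr (Or.inr h')
  -- T_b : for b ∈ B, r (insert (b + n•x) D) (insert (c + n•x) B)
  have Tb : ∀ b ∈ B, r (insert (b + n • x) D) (insert (c + n • x) B) := by
    intro b hb
    refine hr.cut c (Finset.insert_nonempty _ _) (Finset.insert_nonempty _ _) ?_ ?_
    · have hreg := RE.reg' hr c (b + n • x) (c + n • x)
      have e : c + (b + n • x) - (c + n • x) = b := by abel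
      rw [e] at hreg
      refine hr.weaken (by simp) (by simp) ?_ ?_ hreg
      · intro z hz
        simp only [Finset.mem_insert, Finset.mem_singleton] at hz
        rcases hz with rfl | rfl
        · exact Finset.mem_insert_self _ _
        · exact Finset.mem_insert_of_mem (Finset.mem_insert_self _ _)
      · intro z hz
        simp only [Finset.mem_insert, Finset.mem_singleton] at hz
        rcases hz with rfl | rfl
        · exact Finset.mem_insert_self _ _
        · exact Finset.mem_insert_of_mem hb
    · refine hr.weaken hne2 (Finset.insert_nonempty c B) ?_ ?_ h2'
      · intro z hz
        simp only [hD, Finset.mem_insert, Finset.mem_union]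
        rcases Finset.mem_union.mp hz with h' | h'
        · exact Or.inr (Or.inl (Or.inl h'))
        · exact Or.inr (Or.inr h')
      · intro z hz
        rcases Finset.mem_insert.mp hz with rfl | h'
        · exact Finset.mem_insert_self _ _
        · exact Finset.mem_insert_of_mem (Finset.mem_insert_of_mem h')
  -- S5 : r D (insert (c + n•x) B)
  have S5 : r D (insert (c + n • x) B) := by
    have h3 := RE.tfwd hr (n • x) h2'
    have hfun : ((fun z : G => z + n • x) ∘ (fun z : G => z + n • x))
        = (fun z : G => z + (2*n) • x) := by
      funext a; show a + n • x + n • x = a + (2*n) • x; exact e2n a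
    have him : (A ∪ A.image (· + n • x)).image (· + n • x)
        = A.image (· + n • x) ∪ A.image (· + (2*n) • x) := by
      rw [Finset.image_union, Finset.image_image, hfun]
    have hins : (insert c B).image (· + n • x) = insert (c + n • x) (B.image (· + n • x)) :=
      Finset.image_insert _ _ _
    rw [him, hins] at h3
    have start : r D (insert (c + n • x) (B ∪ B.image (· + n • x))) := by
      refine hr.weaken ?_ (Finset.insert_nonempty _ _) ?_ ?_ h3
      · exact (hA.image _).mono Finset.subset_union_left
      · intro z hz
        simp only [hD, Finset.mem_union]
        rcases Finset.mem_union.mp hz with h' | h'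
        · exact Or.inr h'
        · exact Or.inl (Or.inr h')
      · intro z hz
        rcases Finset.mem_insert.mp hz with rfl | h'
        · exact Finset.mem_insert_self _ _
        · exact Finset.mem_insert_of_mem (Finset.mem_union_right _ h')
    have claim : ∀ S : Finset G, S ⊆ B →
        r D (insert (c + n • x) (B ∪ S.image (· + n • x))) →
        r D (insert (c + n • x) B) := by
      intro S
      induction S using Finset.induction_on with
      | empty => intro _ h; simpa using h
      | @insert b S' hb IH =>
        intro hSB h
        have hbB : b ∈ B := hSB (Finset.mem_insert_self b S')
        have hS'B : S' ⊆ B := fun z hz => hSB (Finset.mem_insert_of_mem hz)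
        refine IH hS'B ?_
        refine hr.cut (b + n • x) hDne (Finset.insert_nonempty _ _) ?_ ?_
        · refine hr.weaken (Finset.insert_nonempty _ _) (Finset.insert_nonempty _ _)
            (Finset.Subset.refl _) ?_ (Tb b hbB)
          intro z hz
          rcases Finset.mem_insert.mp hz with rfl | h'
          · exact Finset.mem_insert_self _ _
          · exact Finset.mem_insert_of_mem (Finset.mem_union_left _ h')
        · refine hr.weaken hDne (Finset.insert_nonempty _ _) (Finset.Subset.refl _) ?_ h
          intro z hz
          rcases Finset.mem_insert.mp hz with rfl | h'
          · exact Finset.mem_insert_of_mem (Finset.mem_insert_self _ _)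
          · rcases Finset.mem_union.mp h' with h'' | h''
            · exact Finset.mem_insert_of_mem
                (Finset.mem_insert_of_mem (Finset.mem_union_left _ h''))
            · rw [Finset.image_insert] at h''
              rcases Finset.mem_insert.mp h'' with rfl | h3'
              · exact Finset.mem_insert_self _ _
              · exact Finset.mem_insert_of_mem
                  (Finset.mem_insert_of_mem (Finset.mem_union_right _ h3'))
    exact claim B (Finset.Subset.refl B) start
  have S6 : r D B := hr.cut (c + n • x) hDne hB S4 S5
  exact ⟨2*n, RE.purge hr x (by omega : n ≤ 2*n) hA hB A (Finset.Subset.refl A) S6⟩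

end Helpers

theorem regular_entailment_force {G : Type*} [AddCommGroup G] [Preorder G]
    [CovariantClass G G (· + ·) (· ≤ ·)] [DecidableEq G]
    (r : Finset G → Finset G → Prop) (hr : IsRegularEntailment r) (x : G) :
    IsRegularEntailment (fun A B => ∃ p : ℕ, r (A ∪ A.image (· + p • x)) B) ∧
    (∃ p : ℕ, r (({0} : Finset G) ∪ ({0} : Finset G).image (· + p • x)) {x}) ∧
    (∀ r' : Finset G → Finset G → Prop, IsRegularEntailment r' →
      (∀ A B : Finset G, r A B → r' A B) → r' {0} {x} →
      ∀ A B : Finset G, A.Nonempty → B.Nonempty →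
        (∃ p : ℕ, r (A ∪ A.image (· + p • x)) B) → r' A B) := by
  classical
  refine ⟨⟨?_, ?_, ?_, ?_, ?_⟩, ?_, ?_⟩
  -- weaken
  · rintro A A' B B' hA' hB' hsubA hsubB ⟨p, h⟩
    exact ⟨p, hr.weaken (hA'.mono Finset.subset_union_left) hB'
      (Finset.union_subset_union hsubA (Finset.image_subset_image hsubA)) hsubB h⟩
  -- cut
  · intro A B c hA hB h1 h2
    exact RE.xcut hr x c hA hB h1 h2
  -- of_le
  · intro a b hab
    refine ⟨0, ?_⟩
    simpa using hr.of_le hab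
  -- translate
  · rintro A B t ⟨p, h⟩
    refine ⟨p, ?_⟩
    apply hr.translate t
    have hf : ((fun z : G => z + t) ∘ (fun z : G => z + p • x))
        = ((fun z : G => z + p • x) ∘ (fun z : G => z + t)) := by
      funext a; show a + p • x + t = a + t + p • x; rw [add_right_comm]
    have e : (A ∪ A.image (· + p • x)).image (· + t)
        = (A.image (· + t)) ∪ (A.image (· + t)).image (· + p • x) := by
      rw [Finset.image_union, Finset.image_image, hf, ← Finset.image_image]
    rw [e]
    exact h
  -- regular
  · intro a b u v
    refine ⟨0, ?_⟩
    simpa using hr.regular a b u v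
  -- 0 ⊢ₓ x
  · refine ⟨1, hr.weaken (Finset.singleton_nonempty x) (Finset.singleton_nonempty x)
      ?_ (Finset.Subset.refl _) (hr.of_le (le_refl x))⟩
    intro z hz
    simp only [Finset.mem_singleton] at hz
    subst hz
    simp
  -- minimality
  · rintro r' hr' hsub h0 A B hA hB ⟨p, h⟩
    have step : ∀ a : G, r' {a} {a + x} := by
      intro a
      apply hr'.translate (-a)
      have e1 : ({a} : Finset G).image (· + (-a)) = {0} := by simp
      have e2 : ({a + x} : Finset G).image (· + (-a)) = {x} := by
        rw [Finset.image_singleton]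
        congr 1
        abel
      rw [e1, e2]
      exact h0
    have trans : ∀ a b c : G, r' {a} {b} → r' {b} {c} → r' {a} {c} := by
      intro a b c ha hb
      refine hr'.cut b (by simp) (by simp) ?_ ?_
      · refine hr'.weaken (by simp) (by simp) ?_ (Finset.Subset.refl _) hb
        intro z hz; simp at hz ⊢; tauto
      · refine hr'.weaken (by simp) (by simp) (Finset.Subset.refl _) ?_ ha
        intro z hz; simp at hz ⊢; tauto
    have pow : ∀ (q : ℕ) (a : G), r' {a} {a + q • x} := by
      intro q
      induction q with
      | zero => intro a; simpa using hr'.of_le (le_refl a)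
      | succ q IH =>
        intro a
        have h2 := step (a + q • x)
        have e : a + q • x + x = a + (q + 1) • x := by
          rw [add_smul, one_smul]; abel
        rw [e] at h2
        exact trans _ _ _ (IH a) h2
    have elim : ∀ S : Finset G, (∀ s ∈ S, r' A {s}) → r' (A ∪ S) B → r' A B := by
      intro S
      induction S using Finset.induction_on with
      | empty => intro _ h'; simpa using h'
      | @insert s S' hs IH =>
        intro hall h'
        refine IH (fun z hz => hall z (Finset.mem_insert_of_mem hz)) ?_
        refine hr'.cut s (hA.mono Finset.subset_union_left) hB ?_ ?_
        · refine hr'.weaken (hA.mono Finset.subset_union_left) hB ?_ (Finset.Subset.refl _) h'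
          · intro z hz
            rcases Finset.mem_union.mp hz with h'' | h''
            · exact Finset.mem_insert_of_mem (Finset.mem_union_left _ h'')
            · rcases Finset.mem_insert.mp h'' with rfl | h3
              · exact Finset.mem_insert_self _ _
              · exact Finset.mem_insert_of_mem (Finset.mem_union_right _ h3)
        · refine hr'.weaken hA (Finset.singleton_nonempty s) Finset.subset_union_left ?_
            (hall s (Finset.mem_insert_self s S'))
          intro z hz
          simp only [Finset.mem_singleton] at hz
          subst hz
          exact Finset.mem_insert_self _ _
    refine elim (A.image (· + p • x)) ?_ (hsub _ _ h)
    intro s hs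
    obtain ⟨a, haA, rfl⟩ := Finset.mem_image.mp hs
    refine hr'.weaken (Finset.singleton_nonempty a) (Finset.singleton_nonempty _) ?_
      (Finset.Subset.refl _) (pow p a)
    intro z hz
    simp only [Finset.mem_singleton] at hz
    subst hz
    exact haA
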